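/- arXiv:2605.25088 — 4 statements merged into one kernel-verified Lean document; each statement's English description precedes it below -/
import Mathlib

section
/- Fix r ≥ 1. The map sending (x₁,…,x_r) to the ordered pair (K_r(x₁,…,x_r), K_{r−1}(x₁,…,x_{r−1})) is injective on the set {(x₁,…,x_r) ∈ ℤ^r : x_i ≥ 2 for all i}. That is, if x₁,…,x_r and y₁,…,y_r are integers all ≥ 2 with K_r(x₁,…,x_r) = K_r(y₁,…,y_r) and K_{r−1}(x₁,…,x_{r−1}) = K_{r−1}(y₁,…,y_{r−1}), then x_i = y_i for all i. -/
/-- The continuant `K_i(x₁,…,x_i)`: `K₀ = 1`, `K₁ = x₁`, and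
`K_i = x_i · K_{i-1} − K_{i-2}` for `i ≥ 2`. -/
def contK (x : ℕ → ℤ) : ℕ → ℤ
  | 0 => 1
  | 1 => x 1
  | (n + 2) => x (n + 2) * contK x (n + 1) - contK x n

lemma contK_mono (x : ℕ → ℤ) : ∀ n, (∀ i, 1 ≤ i → i ≤ n + 1 → 2 ≤ x i) →
    1 ≤ contK x n ∧ contK x n < contK x (n + 1) := by
  intro n
  induction n with
  | zero =>
    intro h
    have := h 1 le_rfl le_rfl
    constructor
    · simp [contK]
    · show (1 : ℤ) < x 1
      omega
  | succ n ih =>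
    intro h
    obtain ⟨h1, h2⟩ := ih (fun i hi1 hi2 => h i hi1 (by omega))
    have hx : 2 ≤ x (n + 2) := h (n + 2) (by omega) le_rfl
    have key : contK x (n + 2) = x (n + 2) * contK x (n + 1) - contK x n := rfl
    have hnn : 0 ≤ (x (n + 2) - 2) * contK x (n + 1) :=
      mul_nonneg (by omega) (by linarith)
    constructor
    · linarith
    · rw [key]; nlinarith

theorem continuant_pair_injective (r : ℕ) (hr : 1 ≤ r) (x y : ℕ → ℤ)
    (hx : ∀ i, 1 ≤ i → i ≤ r → 2 ≤ x i)
    (hy : ∀ i, 1 ≤ i → i ≤ r → 2 ≤ y i)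
    (h₁ : contK x r = contK y r)
    (h₂ : contK x (r - 1) = contK y (r - 1)) :
    ∀ i, 1 ≤ i → i ≤ r → x i = y i := by
  induction r with
  | zero => omega
  | succ r ih =>
    rcases Nat.eq_zero_or_pos r with hr0 | hr0
    · subst hr0
      intro i hi1 hi2
      have : i = 1 := by omega
      subst this
      simpa [contK] using h₁
    · -- r ≥ 1
      have hx' : ∀ i, 1 ≤ i → i ≤ r → 2 ≤ x i := fun i a b => hx i a (by omega)
      have hy' : ∀ i, 1 ≤ i → i ≤ r → 2 ≤ y i := fun i a b => hy i a (by omega)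
      -- bounds
      obtain ⟨r', hr'⟩ : ∃ r', r = r' + 1 := ⟨r - 1, by omega⟩
      have mx := contK_mono x r' (by intro i a b; exact hx i a (by omega))
      have my := contK_mono y r' (by intro i a b; exact hy i a (by omega))
      rw [← hr'] at mx my
      have hsimp : (r + 1 : ℕ) - 1 = r := rfl
      rw [hsimp] at h₂
      have keyx : contK x (r + 1) = x (r + 1) * contK x r - contK x (r - 1) := by
        rw [hr']; rfl
      have keyy : contK y (r + 1) = y (r + 1) * contK y r - contK y (r - 1) := by
        rw [hr']; rfl
      have hrr : r - 1 = r' := by omega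
      rw [hrr] at keyx keyy
      rw [keyx, keyy, h₂] at h₁
      -- (x(r+1) - y(r+1)) * contK x r = contK x r' - contK y r'
      have hxy : x (r + 1) = y (r + 1) := by
        have hb : 1 ≤ contK x r' := mx.1
        have hb2 : contK x r' < contK x r := mx.2
        have hc : 1 ≤ contK y r' := my.1
        have hc2 : contK y r' < contK y r := my.2
        rw [h₂] at hb2
        nlinarith [mx.1, my.1, hb2, hc2, h₁]
      have hK' : contK x r' = contK y r' := by
        rw [hxy] at h₁
        have hpos : 0 < contK y r := by linarith [my.1, my.2]
        nlinarith [h₁]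
      intro i hi1 hi2
      rcases Nat.lt_or_ge i (r + 1) with hi | hi
      · exact ih hr0 hx' hy' h₂ (by rw [hrr]; exact hK') i hi1 (by omega)
      · have : i = r + 1 := by omega
        subst this; exact hxy
end

section
/- Let s, t ≥ 1, and let A be an s×s integer matrix, E an s×t integer matrix, G a t×s integer matrix, and H a t×t integer matrix. Then the determinant of the (2s+t)×(2s+t) block matrix with block rows (A, 0, E), (0, A, E), (G, G, H) equals det(A) times the determinant of the (s+t)×(s+t) block matrix with block rows (A, E), (2G, H). -/
/-- The block matrix with block rows `(A, 0, E)`, `(0, A, E)`, `(G, G, H)`. -/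
def twoCopyBlock (s t : ℕ) (A : Matrix (Fin s) (Fin s) ℤ)
    (E : Matrix (Fin s) (Fin t) ℤ) (G : Matrix (Fin t) (Fin s) ℤ)
    (H : Matrix (Fin t) (Fin t) ℤ) :
    Matrix ((Fin s ⊕ Fin s) ⊕ Fin t) ((Fin s ⊕ Fin s) ⊕ Fin t) ℤ :=
  Matrix.fromBlocks (Matrix.fromBlocks A 0 0 A)
    (Matrix.of fun i j => E (Sum.elim id id i) j)
    (Matrix.of fun i j => G i (Sum.elim id id j)) H

open Matrix

theorem two_copy_det (s t : ℕ) (hs : 1 ≤ s) (ht : 1 ≤ t)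
    (A : Matrix (Fin s) (Fin s) ℤ) (E : Matrix (Fin s) (Fin t) ℤ)
    (G : Matrix (Fin t) (Fin s) ℤ) (H : Matrix (Fin t) (Fin t) ℤ) :
    (twoCopyBlock s t A E G H).det =
      A.det * (Matrix.fromBlocks A E ((2 : ℤ) • G) H).det := by
  classical
  set L : Matrix ((Fin s ⊕ Fin s) ⊕ Fin t) ((Fin s ⊕ Fin s) ⊕ Fin t) ℤ :=
    fromBlocks (fromBlocks 1 (-1) 0 1) 0 0 1 with hLdef
  set R : Matrix ((Fin s ⊕ Fin s) ⊕ Fin t) ((Fin s ⊕ Fin s) ⊕ Fin t) ℤ :=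
    fromBlocks (fromBlocks 1 1 0 1) 0 0 1 with hRdef
  set N : Matrix ((Fin s ⊕ Fin s) ⊕ Fin t) ((Fin s ⊕ Fin s) ⊕ Fin t) ℤ :=
    fromBlocks (fromBlocks A 0 0 A)
      (Matrix.of fun i j => Sum.elim (fun _ => (0:ℤ)) (fun i' => E i' j) i)
      (Matrix.of fun i j => Sum.elim (fun a => G i a) (fun a => 2 * G i a) j) H
      with hNdef
  have hL : L.det = 1 := by
    simp [hLdef, Matrix.det_fromBlocks_zero₂₁]
  have hR : R.det = 1 := by
    simp [hRdef, Matrix.det_fromBlocks_zero₂₁]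
  have key : L * twoCopyBlock s t A E G H * R = N := by
    ext i j
    rcases i with (i|i)|i <;> rcases j with (j|j)|j <;>
      simp [hLdef, hRdef, hNdef, twoCopyBlock, Matrix.mul_apply,
        Matrix.fromBlocks, Fintype.sum_sum_type, Matrix.one_apply,
        Finset.sum_ite_eq, Finset.sum_ite_eq', two_mul]
  have hdet : (twoCopyBlock s t A E G H).det = N.det := by
    have := congrArg Matrix.det key
    rwa [Matrix.det_mul, Matrix.det_mul, hL, hR, one_mul, mul_one] at this
  rw [hdet]
  have := Matrix.det_submatrix_equiv_self
    (Equiv.sumAssoc (Fin s) (Fin s) (Fin t)).symm N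
  rw [← this]
  have heq : N.submatrix (Equiv.sumAssoc (Fin s) (Fin s) (Fin t)).symm
      (Equiv.sumAssoc (Fin s) (Fin s) (Fin t)).symm =
      fromBlocks A 0
        (Matrix.of fun i j => Sum.elim (fun _ => (0:ℤ)) (fun i' => G i' j) i)
        (fromBlocks A E ((2:ℤ) • G) H) := by
    ext i j
    rcases i with i|(i|i) <;> rcases j with j|(j|j) <;>
      simp [hNdef, Matrix.fromBlocks, Equiv.sumAssoc, two_mul]
  rw [heq, Matrix.det_fromBlocks_zero₁₂]
end

section
/- Let s, t, u ≥ 1, and let A be an s×s integer matrix, B a t×t integer matrix, P an s×u integer matrix, Q a t×u integer matrix, and F a u×u integer matrix. Let M be the (2s+2t+u)×(2s+2t+u) block matrix with block rows (A,0,0,0,P), (0,A,0,0,P), (0,0,B,0,Q), (0,0,0,B,Q), (Pᵀ,Pᵀ,Qᵀ,Qᵀ,F), and let R be the (s+t+u)×(s+t+u) block matrix with block rows (B,0,Q), (0,A,P), (2Qᵀ,2Pᵀ,F). Then det(M) = det(A)·det(B)·det(R). -/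
/-- The block matrix with block rows `(A,0,0,0,P)`, `(0,A,0,0,P)`,
`(0,0,B,0,Q)`, `(0,0,0,B,Q)`, `(Pᵀ,Pᵀ,Qᵀ,Qᵀ,F)`. -/
def bigBlock (s t u : ℕ) (A : Matrix (Fin s) (Fin s) ℤ)
    (B : Matrix (Fin t) (Fin t) ℤ) (P : Matrix (Fin s) (Fin u) ℤ)
    (Q : Matrix (Fin t) (Fin u) ℤ) (F : Matrix (Fin u) (Fin u) ℤ) :
    Matrix ((Fin s ⊕ Fin s) ⊕ (Fin t ⊕ Fin t) ⊕ Fin u)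
      ((Fin s ⊕ Fin s) ⊕ (Fin t ⊕ Fin t) ⊕ Fin u) ℤ :=
  Matrix.of fun i j =>
    match i, j with
    | .inl (.inl a), .inl (.inl b) => A a b
    | .inl (.inl a), .inr (.inr b) => P a b
    | .inl (.inr a), .inl (.inr b) => A a b
    | .inl (.inr a), .inr (.inr b) => P a b
    | .inr (.inl (.inl a)), .inr (.inl (.inl b)) => B a b
    | .inr (.inl (.inl a)), .inr (.inr b) => Q a b
    | .inr (.inl (.inr a)), .inr (.inl (.inr b)) => B a b
    | .inr (.inl (.inr a)), .inr (.inr b) => Q a b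
    | .inr (.inr a), .inl (.inl b) => P b a
    | .inr (.inr a), .inl (.inr b) => P b a
    | .inr (.inr a), .inr (.inl (.inl b)) => Q b a
    | .inr (.inr a), .inr (.inl (.inr b)) => Q b a
    | .inr (.inr a), .inr (.inr b) => F a b
    | _, _ => 0

/-- The block matrix with block rows `(B,0,Q)`, `(0,A,P)`, `(2Qᵀ,2Pᵀ,F)`. -/
def smallBlock (s t u : ℕ) (A : Matrix (Fin s) (Fin s) ℤ)
    (B : Matrix (Fin t) (Fin t) ℤ) (P : Matrix (Fin s) (Fin u) ℤ)
    (Q : Matrix (Fin t) (Fin u) ℤ) (F : Matrix (Fin u) (Fin u) ℤ) :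
    Matrix (Fin t ⊕ Fin s ⊕ Fin u) (Fin t ⊕ Fin s ⊕ Fin u) ℤ :=
  Matrix.of fun i j =>
    match i, j with
    | .inl a, .inl b => B a b
    | .inl a, .inr (.inr b) => Q a b
    | .inr (.inl a), .inr (.inl b) => A a b
    | .inr (.inl a), .inr (.inr b) => P a b
    | .inr (.inr a), .inl b => 2 * Q b a
    | .inr (.inr a), .inr (.inl b) => 2 * P b a
    | .inr (.inr a), .inr (.inr b) => F a b
    | _, _ => 0


open Matrix

def myEquiv (s t u : ℕ) :
    (Fin s ⊕ Fin t) ⊕ (Fin t ⊕ Fin s ⊕ Fin u) ≃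
      (Fin s ⊕ Fin s) ⊕ ((Fin t ⊕ Fin t) ⊕ Fin u) where
  toFun := fun i =>
    match i with
    | .inl (.inl a) => .inl (.inr a)
    | .inl (.inr b) => .inr (.inl (.inr b))
    | .inr (.inl b) => .inr (.inl (.inl b))
    | .inr (.inr (.inl a)) => .inl (.inl a)
    | .inr (.inr (.inr c)) => .inr (.inr c)
  invFun := fun i =>
    match i with
    | .inl (.inl a) => .inr (.inr (.inl a))
    | .inl (.inr a) => .inl (.inl a)
    | .inr (.inl (.inl b)) => .inr (.inl b)
    | .inr (.inl (.inr b)) => .inl (.inr b)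
    | .inr (.inr c) => .inr (.inr (.inr c))
  left_inv := by rintro ((a|b)|(b|(a|c))) <;> rfl
  right_inv := by rintro ((a|a)|((b|b)|c)) <;> rfl

def lMat (s t u : ℕ) : Matrix ((Fin s ⊕ Fin s) ⊕ ((Fin t ⊕ Fin t) ⊕ Fin u))
    ((Fin s ⊕ Fin s) ⊕ ((Fin t ⊕ Fin t) ⊕ Fin u)) ℤ :=
  fromBlocks (fromBlocks 1 0 (-1) 1) 0 0 (fromBlocks (fromBlocks 1 0 (-1) 1) 0 0 1)

def rMat (s t u : ℕ) : Matrix ((Fin s ⊕ Fin s) ⊕ ((Fin t ⊕ Fin t) ⊕ Fin u))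
    ((Fin s ⊕ Fin s) ⊕ ((Fin t ⊕ Fin t) ⊕ Fin u)) ℤ :=
  fromBlocks (fromBlocks 1 0 1 1) 0 0 (fromBlocks (fromBlocks 1 0 1 1) 0 0 1)

def cMat (s t u : ℕ) (P : Matrix (Fin s) (Fin u) ℤ) (Q : Matrix (Fin t) (Fin u) ℤ) :
    Matrix (Fin t ⊕ Fin s ⊕ Fin u) (Fin s ⊕ Fin t) ℤ :=
  Matrix.of fun i j =>
    match i, j with
    | .inr (.inr c), .inl a => P a c
    | .inr (.inr c), .inr b => Q b c
    | _, _ => 0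

set_option maxHeartbeats 1000000 in
theorem key (s t u : ℕ)
    (A : Matrix (Fin s) (Fin s) ℤ) (B : Matrix (Fin t) (Fin t) ℤ)
    (P : Matrix (Fin s) (Fin u) ℤ) (Q : Matrix (Fin t) (Fin u) ℤ)
    (F : Matrix (Fin u) (Fin u) ℤ) :
    ((lMat s t u * bigBlock s t u A B P Q F * rMat s t u).submatrix
        (myEquiv s t u) (myEquiv s t u)) =
      fromBlocks (fromBlocks A 0 0 B) 0 (cMat s t u P Q)
        (smallBlock s t u A B P Q F) := by
  ext i j
  rcases i with (a|b)|(b|a|c) <;> rcases j with (a'|b')|(b'|a'|c') <;>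
    simp [lMat, rMat, bigBlock, smallBlock, cMat, myEquiv, mul_apply,
      Fintype.sum_sum_type, one_apply, two_mul, mul_comm] <;> ring


theorem double_two_copy_det (s t u : ℕ) (hs : 1 ≤ s) (ht : 1 ≤ t) (hu : 1 ≤ u)
    (A : Matrix (Fin s) (Fin s) ℤ) (B : Matrix (Fin t) (Fin t) ℤ)
    (P : Matrix (Fin s) (Fin u) ℤ) (Q : Matrix (Fin t) (Fin u) ℤ)
    (F : Matrix (Fin u) (Fin u) ℤ) :
    (bigBlock s t u A B P Q F).det =
      A.det * B.det * (smallBlock s t u A B P Q F).det := by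
  have hL : (lMat s t u).det = 1 := by
    simp [lMat, det_fromBlocks_zero₁₂, det_fromBlocks_zero₂₁]
  have hR : (rMat s t u).det = 1 := by
    simp [rMat, det_fromBlocks_zero₁₂, det_fromBlocks_zero₂₁]
  have h1 : (bigBlock s t u A B P Q F).det =
      ((lMat s t u * bigBlock s t u A B P Q F * rMat s t u).submatrix
        (myEquiv s t u) (myEquiv s t u)).det := by
    rw [det_submatrix_equiv_self, det_mul, det_mul, hL, hR, one_mul, mul_one]
  rw [h1, key, det_fromBlocks_zero₁₂, det_fromBlocks_zero₁₂]
end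

section
/- Fix a real number η > 0. There exists C such that for all integers m ≥ 3 and q ≥ 1 with m + q ≥ C, the number of distinct values of D_w, as w ranges over {2,3,…,q+1}^m, is at least q^m / (q+1)^{2ηm}. -/
/-- Extension of a word `w = (w₁,…,w_m)` (indexed by `Fin m`) to a sequence
indexed from `1`: position `j ∈ {1,…,m}` has value `w_j`. -/
def wext (m : ℕ) (w : Fin m → ℕ) : ℕ → ℤ :=
  fun j => if h : j - 1 < m then (w ⟨j - 1, h⟩ : ℤ) else 2

/-- `D_w = K_m(w₁,…,w_m) · K_{m−1}(w₁,…,w_{m−1})`. -/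
def Dword (m : ℕ) (w : Fin m → ℕ) : ℤ :=
  contK (wext m w) m * contK (wext m w) (m - 1)


open Real Filter


lemma contK_pos_and_grow (x : ℕ → ℤ) (h2 : ∀ j, 2 ≤ x j) :
    ∀ i, 1 ≤ contK x i ∧ contK x i + 1 ≤ contK x (i + 1) := by
  intro i
  induction i using Nat.twoStepInduction with
  | zero => simp [contK]; linarith [h2 1]
  | one =>
    have := h2 1; have := h2 2
    constructor
    · simp [contK]; linarith
    · show x 1 + 1 ≤ x 2 * x 1 - 1
      nlinarith
  | more n ih1 ih2 =>
    obtain ⟨hp1, hg1⟩ := ih1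
    obtain ⟨hp2, hg2⟩ := ih2
    have hx := h2 (n + 3)
    constructor
    · linarith
    · show contK x (n+2) + 1 ≤ x (n+3) * contK x (n+2) - contK x (n+1)
      nlinarith

lemma contK_pos (x : ℕ → ℤ) (h2 : ∀ j, 2 ≤ x j) (i : ℕ) : 1 ≤ contK x i :=
  (contK_pos_and_grow x h2 i).1

lemma contK_lt_succ (x : ℕ → ℤ) (h2 : ∀ j, 2 ≤ x j) (i : ℕ) :
    contK x i < contK x (i + 1) := by
  have := (contK_pos_and_grow x h2 i).2; linarith

lemma contK_le_pow (x : ℕ → ℤ) (h2 : ∀ j, 2 ≤ x j) (b : ℤ) (hb : ∀ j, x j ≤ b) :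
    ∀ i, contK x i ≤ b ^ i := by
  intro i
  have hb2 : 2 ≤ b := le_trans (h2 1) (hb 1)
  induction i using Nat.twoStepInduction with
  | zero => simp [contK]
  | one => simpa [contK] using hb 1
  | more n ih1 ih2 =>
    show x (n+2) * contK x (n+1) - contK x n ≤ b ^ (n + 2)
    have h1 := contK_pos x h2 (n + 1)
    have h0 := contK_pos x h2 n
    have : x (n+2) * contK x (n+1) ≤ b * b ^ (n+1) := by
      have := hb (n+2)
      have := h2 (n+2)
      nlinarith
    calc x (n+2) * contK x (n+1) - contK x n ≤ x (n+2) * contK x (n+1) := by linarith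
      _ ≤ b * b ^ (n+1) := this
      _ = b ^ (n+2) := by ring

/-- Injectivity: the pair (K_{n}, K_{n+1}) determines x on [1, n+1]. -/
lemma contK_inj (x y : ℕ → ℤ) (hx : ∀ j, 2 ≤ x j) (hy : ∀ j, 2 ≤ y j) :
    ∀ n, contK x n = contK y n → contK x (n + 1) = contK y (n + 1) →
      ∀ j, 1 ≤ j → j ≤ n + 1 → x j = y j := by
  intro n
  induction n with
  | zero =>
    intro _ h1 j hj1 hj2
    interval_cases j
    simpa [contK] using h1
  | succ n ih =>
    intro hn hsn j hj1 hj2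
    -- hn : contK x (n+1) = contK y (n+1), hsn : contK x (n+2) = contK y (n+2)
    have key : x (n + 2) = y (n + 2) ∧ contK x n = contK y n := by
      have e : x (n+2) * contK x (n+1) - contK x n
          = y (n+2) * contK y (n+1) - contK y n := hsn
      rw [← hn] at e
      have hgx : contK x n < contK x (n + 1) := contK_lt_succ x hx n
      have hgy : contK y n < contK y (n + 1) := contK_lt_succ y hy n
      rw [← hn] at hgy
      have hpx : 1 ≤ contK x n := contK_pos x hx n
      have hpy : 1 ≤ contK y n := contK_pos y hy n
      have hpos : 1 ≤ contK x (n + 1) := contK_pos x hx (n + 1)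
      have hd : (x (n+2) - y (n+2)) * contK x (n+1) = contK x n - contK y n := by linear_combination e
      have hxy : x (n + 2) = y (n + 2) := by nlinarith [hd]
      constructor
      · exact hxy
      · rw [hxy] at hd; nlinarith [hd]
    rcases Nat.lt_or_ge j (n + 2) with h | h
    · exact ih key.2 hn j hj1 (by omega)
    · have : j = n + 2 := by omega
      rw [this]; exact key.1


-- (a+1) ≤ A * t^a for t > 1, some A
lemma aux_bdd {t : ℝ} (ht : 1 < t) : ∃ A : ℝ, 1 ≤ A ∧ ∀ a : ℕ, (a + 1 : ℝ) ≤ A * t ^ a := by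
  have hr0 : (0:ℝ) ≤ t⁻¹ := by positivity
  have hr1 : t⁻¹ < 1 := inv_lt_one_of_one_lt₀ ht
  have h1 : Tendsto (fun a : ℕ => (a : ℝ) * t⁻¹ ^ a) atTop (nhds 0) :=
    tendsto_self_mul_const_pow_of_lt_one hr0 hr1
  have h2 : Tendsto (fun a : ℕ => t⁻¹ ^ a) atTop (nhds 0) :=
    tendsto_pow_atTop_nhds_zero_of_lt_one hr0 hr1
  have h3 : Tendsto (fun a : ℕ => ((a : ℝ) + 1) * t⁻¹ ^ a) atTop (nhds 0) := by
    have := h1.add h2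
    simpa [add_mul] using this
  obtain ⟨A, hA⟩ := h3.bddAbove_range
  refine ⟨max A 1, le_max_right _ _, fun a => ?_⟩
  have hmem : ((a : ℝ) + 1) * t⁻¹ ^ a ≤ A := hA (Set.mem_range_self a)
  have htpow : (0:ℝ) < t ^ a := by positivity
  have : ((a : ℝ) + 1) ≤ A * t ^ a := by
    have := mul_le_mul_of_nonneg_right hmem (le_of_lt htpow)
    rw [mul_assoc, ← mul_pow, inv_mul_cancel₀ (by linarith : t ≠ 0), one_pow, mul_one] at this
    exact this
  calc ((a:ℝ) + 1) ≤ A * t ^ a := this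
    _ ≤ max A 1 * t ^ a := by
        apply mul_le_mul_of_nonneg_right (le_max_left _ _) (le_of_lt htpow)

lemma divisor_bound {ε : ℝ} (hε : 0 < ε) :
    ∃ C : ℝ, 1 ≤ C ∧ ∀ n : ℕ, n ≠ 0 → (n.divisors.card : ℝ) ≤ C * (n : ℝ) ^ ε := by
  have h2ε : (1:ℝ) < (2:ℝ) ^ ε := by
    rw [show (1:ℝ) = (2:ℝ) ^ (0:ℝ) by simp]
    exact Real.rpow_lt_rpow_left_iff (by norm_num) |>.mpr hε
  obtain ⟨A, hA1, hA⟩ := aux_bdd h2ε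
  set P : ℕ := ⌈(2:ℝ) ^ (1/ε)⌉₊ with hP
  refine ⟨A ^ (P + 1), one_le_pow₀ hA1, fun n hn => ?_⟩
  rw [Nat.card_divisors hn]
  -- key per-prime bound
  have key : ∀ p ∈ n.primeFactors,
      ((n.factorization p + 1 : ℕ) : ℝ) ≤
        (if p ≤ P then A else 1) * ((p : ℝ) ^ (n.factorization p : ℕ)) ^ ε := by
    intro p hp
    have hpp : p.Prime := Nat.prime_of_mem_primeFactors hp
    have hp2 : (2:ℝ) ≤ (p:ℝ) := by exact_mod_cast hpp.two_le
    set a := n.factorization p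
    have hpa : ((p:ℝ) ^ a) ^ ε = ((p:ℝ) ^ ε) ^ a := by
      rw [← Real.rpow_natCast (p:ℝ) a, ← Real.rpow_natCast ((p:ℝ)^ε) a,
        ← Real.rpow_mul (by positivity), ← Real.rpow_mul (by positivity), mul_comm]
    by_cases hple : p ≤ P
    · simp only [if_pos hple]
      rw [hpa]
      have hbase : (2:ℝ) ^ ε ≤ (p:ℝ) ^ ε :=
        Real.rpow_le_rpow (by norm_num) hp2 (le_of_lt hε)
      calc ((a + 1 : ℕ) : ℝ) = (a : ℝ) + 1 := by push_cast; ring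
        _ ≤ A * ((2:ℝ) ^ ε) ^ a := hA a
        _ ≤ A * ((p:ℝ) ^ ε) ^ a := by
            apply mul_le_mul_of_nonneg_left _ (by linarith)
            exact pow_le_pow_left₀ (by positivity) hbase a
    · simp only [if_neg hple, one_mul]
      rw [hpa]
      -- p > P ≥ 2^{1/ε}, so p^ε ≥ 2, hence a+1 ≤ 2^a ≤ (p^ε)^a
      have hPp : (2:ℝ) ^ (1/ε) ≤ (p:ℝ) := by
        have : (2:ℝ) ^ (1/ε) ≤ (P : ℝ) := Nat.le_ceil _
        have : (P : ℝ) ≤ (p : ℝ) := by exact_mod_cast Nat.le_of_not_lt (by omega)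
        linarith [Nat.le_ceil ((2:ℝ) ^ (1/ε))]
      have h2le : (2:ℝ) ≤ (p:ℝ) ^ ε := by
        have := Real.rpow_le_rpow (by positivity) hPp (le_of_lt hε)
        rwa [← Real.rpow_mul (by norm_num), one_div, inv_mul_cancel₀ (ne_of_gt hε),
          Real.rpow_one] at this
      calc ((a + 1 : ℕ) : ℝ) = (a : ℝ) + 1 := by push_cast; ring
        _ ≤ 2 ^ a := by exact_mod_cast Nat.succ_le_of_lt (Nat.lt_two_pow_self (n := a))
        _ ≤ ((p:ℝ) ^ ε) ^ a := pow_le_pow_left₀ (by norm_num) h2le a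
  -- multiply over primes
  have hprod : ((n.primeFactors.prod fun p => n.factorization p + 1 : ℕ) : ℝ)
      ≤ (n.primeFactors.prod fun p => (if p ≤ P then A else 1) * ((p : ℝ) ^ (n.factorization p : ℕ)) ^ ε) := by
    push_cast
    apply Finset.prod_le_prod
    · intro p hp; positivity
    · intro p hp; exact_mod_cast key p hp
  rw [Finset.prod_mul_distrib] at hprod
  have hc : (n.primeFactors.prod fun p => (if p ≤ P then A else 1)) ≤ A ^ (P + 1) := by
    rw [← Finset.prod_filter_mul_prod_filter_not n.primeFactors (fun p => p ≤ P)]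
    have h1 : (Finset.filter (fun p => p ≤ P) n.primeFactors).prod (fun p => if p ≤ P then A else 1)
        ≤ A ^ (P + 1) := by
      calc (Finset.filter (fun p => p ≤ P) n.primeFactors).prod (fun p => if p ≤ P then A else 1)
          ≤ (Finset.filter (fun p => p ≤ P) n.primeFactors).prod (fun _ => A) := by
            apply Finset.prod_le_prod
            · intro p hp; split <;> norm_num <;> linarith
            · intro p hp; split <;> linarith
        _ = A ^ (Finset.filter (fun p => p ≤ P) n.primeFactors).card := by
            rw [Finset.prod_const]
        _ ≤ A ^ (P + 1) := by
            apply pow_le_pow_right₀ hA1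
            calc (Finset.filter (fun p => p ≤ P) n.primeFactors).card
                ≤ (Finset.range (P+1)).card := by
                  apply Finset.card_le_card
                  intro p hp
                  simp only [Finset.mem_filter] at hp
                  simp [Finset.mem_range]; omega
              _ = P + 1 := by simp
    have h2 : (Finset.filter (fun p => ¬ p ≤ P) n.primeFactors).prod (fun p => if p ≤ P then A else 1) = 1 := by
      apply Finset.prod_eq_one
      intro p hp
      simp only [Finset.mem_filter] at hp
      rw [if_neg hp.2]
    rw [h2, mul_one]; exact h1
  have hn' : (n.primeFactors.prod fun p => ((p : ℝ) ^ (n.factorization p : ℕ)) ^ ε) = (n : ℝ) ^ ε := by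
    rw [Real.finset_prod_rpow _ _ (fun p _ => by positivity) ε]
    congr 1
    rw_mod_cast [← Nat.factorization_prod_pow_eq_self hn]
    rw [Nat.factorization_prod_pow_eq_self hn, ← Nat.support_factorization]
    exact Nat.factorization_prod_pow_eq_self hn
  rw [hn'] at hprod
  calc ((n.primeFactors.prod fun p => n.factorization p + 1 : ℕ) : ℝ)
      ≤ (n.primeFactors.prod fun p => (if p ≤ P then A else 1)) * (n:ℝ) ^ ε := hprod
    _ ≤ A ^ (P + 1) * (n:ℝ) ^ ε := by
        apply mul_le_mul_of_nonneg_right hc (by positivity)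

lemma wext_ge2 {m q : ℕ} {w : Fin m → ℕ} (hw : ∀ i, 2 ≤ w i ∧ w i ≤ q + 1) :
    ∀ j, 2 ≤ wext m w j := by
  intro j
  unfold wext
  split
  · exact_mod_cast (hw _).1
  · exact le_refl 2

lemma wext_le {m q : ℕ} (hq : 1 ≤ q) {w : Fin m → ℕ} (hw : ∀ i, 2 ≤ w i ∧ w i ≤ q + 1) :
    ∀ j, wext m w j ≤ (q : ℤ) + 1 := by
  intro j
  unfold wext
  split
  · exact_mod_cast (hw _).2
  · omega

lemma word_inj {m q : ℕ} (hm : 1 ≤ m) {w v : Fin m → ℕ}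
    (hw : ∀ i, 2 ≤ w i ∧ w i ≤ q + 1) (hv : ∀ i, 2 ≤ v i ∧ v i ≤ q + 1)
    (h1 : contK (wext m w) m = contK (wext m v) m)
    (h2 : contK (wext m w) (m - 1) = contK (wext m v) (m - 1)) :
    w = v := by
  have hx := wext_ge2 (q := q) hw
  have hy := wext_ge2 (q := q) hv
  have key := contK_inj (wext m w) (wext m v) hx hy (m - 1) h2
    (by rwa [Nat.sub_add_cancel hm])
  funext i
  have hi : wext m w (i + 1) = wext m v (i + 1) := by
    apply key (i + 1) (by omega) (by omega)
  unfold wext at hi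
  simp only [Nat.add_sub_cancel, i.isLt, dif_pos] at hi
  exact_mod_cast hi

lemma pow_ge_add (m q : ℕ) (hm : 1 ≤ m) (hq : 1 ≤ q) : m + q ≤ (q + 1) ^ m := by
  induction m with
  | zero => omega
  | succ n ih =>
    rcases Nat.eq_zero_or_pos n with h | h
    · subst h; simp; omega
    · have := ih h
      have : (q + 1) ^ (n + 1) = (q + 1) ^ n * (q + 1) := by ring
      nlinarith [ih h, pow_pos (by omega : 0 < q + 1) n]

theorem many_distinct_divisors (η : ℝ) (hη : 0 < η) :
    ∃ C : ℕ, ∀ m q : ℕ, 3 ≤ m → 1 ≤ q → C ≤ m + q →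
      (q : ℝ) ^ m / ((q : ℝ) + 1) ^ (2 * η * (m : ℝ)) ≤
        (Set.ncard {d : ℤ | ∃ w : Fin m → ℕ,
          (∀ i, 2 ≤ w i ∧ w i ≤ q + 1) ∧ Dword m w = d} : ℝ) := by
  obtain ⟨C, hC1, hC⟩ := divisor_bound (half_pos hη)
  refine ⟨⌈C ^ η⁻¹⌉₊ + 1, fun m q hm hq hmq => ?_⟩
  set T : Finset (Fin m → ℕ) := Fintype.piFinset (fun _ => Finset.Icc 2 (q + 1)) with hT
  set I : Finset ℤ := T.image (Dword m) with hI
  have hmemT : ∀ w : Fin m → ℕ, w ∈ T ↔ ∀ i, 2 ≤ w i ∧ w i ≤ q + 1 := by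
    intro w
    simp [hT, Fintype.mem_piFinset, Finset.mem_Icc]
  -- the set in the statement is ↑I
  have hset : {d : ℤ | ∃ w : Fin m → ℕ,
      (∀ i, 2 ≤ w i ∧ w i ≤ q + 1) ∧ Dword m w = d} = ↑I := by
    ext d
    simp only [Set.mem_setOf_eq, hI, Finset.coe_image, Set.mem_image, Finset.mem_coe]
    constructor
    · rintro ⟨w, hw, rfl⟩; exact ⟨w, (hmemT w).2 hw, rfl⟩
    · rintro ⟨w, hw, rfl⟩; exact ⟨w, (hmemT w).1 hw, rfl⟩
  rw [hset, Set.ncard_coe_finset]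
  -- cardinality of T
  have hTcard : T.card = q ^ m := by
    rw [hT, Fintype.card_piFinset]
    simp [Nat.card_Icc]
  -- bound on |Dword| : for w ∈ T, 1 ≤ Dword m w and Dword m w ≤ (q+1)^(2m)
  have hDpos : ∀ w ∈ T, 1 ≤ Dword m w := by
    intro w hw
    have h2 := wext_ge2 (q := q) ((hmemT w).1 hw)
    have := contK_pos (wext m w) h2 m
    have := contK_pos (wext m w) h2 (m - 1)
    unfold Dword; nlinarith
  have hDle : ∀ w ∈ T, Dword m w ≤ ((q : ℤ) + 1) ^ (2 * m) := by
    intro w hw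
    have h2 := wext_ge2 (q := q) ((hmemT w).1 hw)
    have hb := wext_le hq ((hmemT w).1 hw)
    have h1 := contK_le_pow (wext m w) h2 ((q : ℤ) + 1) hb m
    have h1' := contK_le_pow (wext m w) h2 ((q : ℤ) + 1) hb (m - 1)
    have hq1 : (1 : ℤ) ≤ (q : ℤ) + 1 := by
      have : (0:ℤ) ≤ (q:ℤ) := Int.natCast_nonneg q
      linarith
    have hple : ((q : ℤ) + 1) ^ (m - 1) ≤ ((q : ℤ) + 1) ^ m :=
      pow_le_pow_right₀ hq1 (by omega)
    have hp1 := contK_pos (wext m w) h2 m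
    have hp2 := contK_pos (wext m w) h2 (m - 1)
    have hpp : (0 : ℤ) < ((q : ℤ) + 1) ^ m := by positivity
    calc Dword m w = contK (wext m w) m * contK (wext m w) (m - 1) := rfl
      _ ≤ ((q : ℤ) + 1) ^ m * ((q : ℤ) + 1) ^ m := by nlinarith
      _ = ((q : ℤ) + 1) ^ (2 * m) := by ring
  -- fiber bound
  have hfiber : ∀ d ∈ I, ((T.filter (fun w => Dword m w = d)).card : ℝ)
      ≤ C * ((q : ℝ) + 1) ^ (η * m) := by
    intro d hd
    obtain ⟨w₀, hw₀, hdw₀⟩ := Finset.mem_image.1 hd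
    have hd1 : 1 ≤ d := hdw₀ ▸ hDpos w₀ hw₀
    have hdle : d ≤ ((q : ℤ) + 1) ^ (2 * m) := hdw₀ ▸ hDle w₀ hw₀
    have hinj : (T.filter (fun w => Dword m w = d)).card ≤ (d.natAbs).divisors.card := by
      apply Finset.card_le_card_of_injOn (fun w => (contK (wext m w) m).toNat)
      · intro w hw
        simp only [Finset.coe_filter, Set.mem_setOf_eq] at hw
        obtain ⟨hwT, hwd⟩ := hw
        have h2 := wext_ge2 (q := q) ((hmemT w).1 hwT)
        have hp := contK_pos (wext m w) h2 m
        rw [Finset.mem_coe, Nat.mem_divisors]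
        beta_reduce
        constructor
        · have hdvd : contK (wext m w) m ∣ d := ⟨contK (wext m w) (m - 1), hwd.symm⟩
          have h' : (contK (wext m w) m).natAbs ∣ d.natAbs := Int.natAbs_dvd_natAbs.mpr hdvd
          have he : (contK (wext m w) m).toNat = (contK (wext m w) m).natAbs := by omega
          rwa [he]
        · omega
      · intro w hw v hv heq
        simp only [Finset.coe_filter, Set.mem_setOf_eq] at hw hv
        obtain ⟨hwT, hwd⟩ := hw
        obtain ⟨hvT, hvd⟩ := hv
        have h2w := wext_ge2 (q := q) ((hmemT w).1 hwT)
        have h2v := wext_ge2 (q := q) ((hmemT v).1 hvT)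
        have hpw := contK_pos (wext m w) h2w m
        have hpv := contK_pos (wext m v) h2v m
        have hKm : contK (wext m w) m = contK (wext m v) m := by
          have := congrArg (fun n : ℕ => (n : ℤ)) heq
          simpa [Int.toNat_of_nonneg (by linarith : (0:ℤ) ≤ contK (wext m w) m),
            Int.toNat_of_nonneg (by linarith : (0:ℤ) ≤ contK (wext m v) m)] using this
        have hKm1 : contK (wext m w) (m - 1) = contK (wext m v) (m - 1) := by
          have h : contK (wext m w) m * contK (wext m w) (m - 1)
              = contK (wext m v) m * contK (wext m v) (m - 1) := by
            rw [show contK (wext m w) m * contK (wext m w) (m-1) = Dword m w from rfl,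
              show contK (wext m v) m * contK (wext m v) (m-1) = Dword m v from rfl, hwd, hvd]
          rw [hKm] at h
          exact mul_left_cancel₀ (by linarith : contK (wext m v) m ≠ 0) h
        exact word_inj (by omega) ((hmemT w).1 hwT) ((hmemT v).1 hvT) hKm hKm1
    -- divisors card bound
    have hdnat : d.natAbs ≠ 0 := by omega
    have hdiv : ((d.natAbs).divisors.card : ℝ) ≤ C * ((d.natAbs : ℕ) : ℝ) ^ (η / 2) :=
      hC _ hdnat
    have hcast : ((d.natAbs : ℕ) : ℝ) ≤ ((q : ℝ) + 1) ^ (2 * m : ℕ) := by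
      have : ((d.natAbs : ℕ) : ℤ) = d := Int.natAbs_of_nonneg (by linarith)
      have h1 : ((d.natAbs : ℕ) : ℝ) = (d : ℝ) := by
        rw [Nat.cast_natAbs]
        rw [abs_of_nonneg (by linarith : (0:ℤ) ≤ d)]
      rw [h1]
      exact_mod_cast hdle
    have hrp : (((q : ℝ) + 1) ^ (2 * m : ℕ)) ^ (η / 2) = ((q : ℝ) + 1) ^ (η * m) := by
      rw [← Real.rpow_natCast ((q : ℝ) + 1) (2 * m), ← Real.rpow_mul (by positivity)]
      congr 1
      push_cast
      ring
    calc ((T.filter (fun w => Dword m w = d)).card : ℝ)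
        ≤ ((d.natAbs).divisors.card : ℝ) := by exact_mod_cast hinj
      _ ≤ C * ((d.natAbs : ℕ) : ℝ) ^ (η / 2) := hdiv
      _ ≤ C * (((q : ℝ) + 1) ^ (2 * m : ℕ)) ^ (η / 2) := by
          apply mul_le_mul_of_nonneg_left _ (by linarith)
          exact Real.rpow_le_rpow (by positivity) hcast (by linarith)
      _ = C * ((q : ℝ) + 1) ^ (η * m) := by rw [hrp]
  -- C ≤ (q+1)^(η m)
  have hCle : C ≤ ((q : ℝ) + 1) ^ (η * m) := by
    have h1 : (⌈C ^ η⁻¹⌉₊ + 1 : ℕ) ≤ (q + 1) ^ m := le_trans hmq (pow_ge_add m q (by omega) hq)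
    have h2 : C ^ η⁻¹ ≤ (((q : ℝ) + 1) ^ m : ℝ) := by
      calc C ^ η⁻¹ ≤ (⌈C ^ η⁻¹⌉₊ : ℝ) := Nat.le_ceil _
        _ ≤ ((⌈C ^ η⁻¹⌉₊ + 1 : ℕ) : ℝ) := by push_cast; linarith
        _ ≤ (((q + 1) ^ m : ℕ) : ℝ) := by exact_mod_cast h1
        _ = ((q : ℝ) + 1) ^ m := by push_cast; ring
    have h3 := Real.rpow_le_rpow (by positivity) h2 (le_of_lt hη)
    rw [← Real.rpow_natCast ((q:ℝ)+1) m] at h3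
    rw [← Real.rpow_mul (by linarith : (0:ℝ) ≤ C)] at h3
    rw [← Real.rpow_mul (by positivity : (0:ℝ) ≤ (q:ℝ)+1)] at h3
    rwa [inv_mul_cancel₀ (ne_of_gt hη), Real.rpow_one, mul_comm (m : ℝ) η] at h3
  -- counting
  have hcount : ((q : ℝ) ^ m) ≤ (I.card : ℝ) * (C * ((q : ℝ) + 1) ^ (η * m)) := by
    have h0 : T.card = ∑ d ∈ I, (T.filter (fun w => Dword m w = d)).card :=
      Finset.card_eq_sum_card_fiberwise (fun w hw => Finset.mem_image_of_mem _ hw)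
    have h1 : ((T.card : ℕ) : ℝ) ≤ ∑ d ∈ I, (C * ((q : ℝ) + 1) ^ (η * m)) := by
      rw [h0]
      push_cast
      exact Finset.sum_le_sum hfiber
    rw [Finset.sum_const, nsmul_eq_mul] at h1
    calc ((q : ℝ) ^ m) = ((T.card : ℕ) : ℝ) := by rw [hTcard]; push_cast; ring
      _ ≤ (I.card : ℝ) * (C * ((q : ℝ) + 1) ^ (η * m)) := h1
  -- finish
  have hb : (0 : ℝ) < ((q : ℝ) + 1) ^ (2 * η * m) := Real.rpow_pos_of_pos (by positivity) _
  rw [div_le_iff₀ hb]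
  have hfin : C * ((q : ℝ) + 1) ^ (η * m) ≤ ((q : ℝ) + 1) ^ (2 * η * m) := by
    have : ((q : ℝ) + 1) ^ (η * m) * ((q : ℝ) + 1) ^ (η * m) = ((q : ℝ) + 1) ^ (2 * η * m) := by
      rw [← Real.rpow_add (by positivity)]
      congr 1; ring
    calc C * ((q : ℝ) + 1) ^ (η * m)
        ≤ ((q : ℝ) + 1) ^ (η * m) * ((q : ℝ) + 1) ^ (η * m) := by
          apply mul_le_mul_of_nonneg_right hCle (le_of_lt (Real.rpow_pos_of_pos (by positivity) _))
      _ = ((q : ℝ) + 1) ^ (2 * η * m) := this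
  calc (q : ℝ) ^ m ≤ (I.card : ℝ) * (C * ((q : ℝ) + 1) ^ (η * m)) := hcount
    _ ≤ (I.card : ℝ) * ((q : ℝ) + 1) ^ (2 * η * m) := by
        apply mul_le_mul_of_nonneg_left hfin (by positivity)
end
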